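/- For a pure two-qubit state of the Cabello form |Ψ^C⟩ (parametrized by c, δ, α, β, φ, ξ) measured with A_0 = B_0 = σ_z and A_1, B_1 the projective measurements along the Bloch directions with polar angles α, β and azimuthal angles φ, ξ, the degree of success S = P(+,+|A_1,B_1) − P(+,+|A_0,B_0) equals (1/4)[cos α cos β + cos α + cos β − 3 − 2c sin α sin β cos(δ+ξ+φ)·√(1 − c² tan²(α/2) − 2c²/(cos β + 1)) + 2c²(cos α (cos β − 1) + 2 tan²(α/2) − cos β + 2 tan²(β/2) + 1)]. -/

import Mathlib

open Complex Real Matrix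

/-- Degree of success of Cabello's argument for the two-qubit Cabello state
(Eq. (7)) with measurements `A₀ = B₀ = σ_z` and `A₁, B₁` along Bloch
directions `(α,φ)` and `(β,ξ)`: it equals the closed formula of Eq. (8). -/
theorem cabello_success_qubit_formula
    (c δ α β φ ξ : ℝ) (hc : 0 ≤ c) (hc' : c ≤ 1)
    (hα : 0 < α) (hα' : α < Real.pi) (hβ : 0 < β) (hβ' : β < Real.pi)
    (hfeas : c ^ 2 * (1 + Real.tan (α / 2) ^ 2 + Real.tan (β / 2) ^ 2) ≤ 1) :
    let Ψ : Matrix (Fin 2) (Fin 2) ℂ :=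
      !![Complex.exp (Complex.I * δ) *
            (Real.sqrt (1 - c ^ 2 * (1 + Real.tan (α / 2) ^ 2 + Real.tan (β / 2) ^ 2)) : ℂ),
          -(c : ℂ) * Complex.exp (-Complex.I * φ) * (Real.tan (α / 2) : ℂ);
          -(c : ℂ) * Complex.exp (-Complex.I * ξ) * (Real.tan (β / 2) : ℂ), (c : ℂ)]
    let u : Fin 2 → ℂ := ![(Real.cos (α / 2) : ℂ),
          Complex.exp (Complex.I * φ) * (Real.sin (α / 2) : ℂ)]
    let v : Fin 2 → ℂ := ![(Real.cos (β / 2) : ℂ),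
          Complex.exp (Complex.I * ξ) * (Real.sin (β / 2) : ℂ)]
    let p : ℝ := ‖∑ i, ∑ j, (starRingEnd ℂ) (Ψ i j) * (u i * v j)‖ ^ 2
    let q : ℝ := ‖Ψ 0 0‖ ^ 2
    p - q = (1 / 4) * (Real.cos α * Real.cos β + Real.cos α + Real.cos β - 3
        - 2 * c * Real.sin α * Real.sin β * Real.cos (δ + ξ + φ) *
            Real.sqrt (c ^ 2 * (-Real.tan (α / 2) ^ 2) - 2 * c ^ 2 / (Real.cos β + 1) + 1)
        + 2 * c ^ 2 * (Real.cos α * (Real.cos β - 1) + 2 * Real.tan (α / 2) ^ 2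
            - Real.cos β + 2 * Real.tan (β / 2) ^ 2 + 1)) := by
  intro Ψ u v p q
  have hca0 : 0 < Real.cos (α / 2) := by
    apply Real.cos_pos_of_mem_Ioo
    constructor <;> nlinarith [Real.pi_pos]
  have hcb0 : 0 < Real.cos (β / 2) := by
    apply Real.cos_pos_of_mem_Ioo
    constructor <;> nlinarith [Real.pi_pos]
  have hca : Real.cos (α / 2) ≠ 0 := ne_of_gt hca0
  have hcb : Real.cos (β / 2) ≠ 0 := ne_of_gt hcb0
  set ta := Real.tan (α / 2) with hta_def
  set tb := Real.tan (β / 2) with htb_def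
  set sa := Real.sin (α / 2) with hsa_def
  set ca := Real.cos (α / 2) with hca_def
  set sb := Real.sin (β / 2) with hsb_def
  set cb := Real.cos (β / 2) with hcb_def
  set S := Real.sqrt (1 - c ^ 2 * (1 + ta ^ 2 + tb ^ 2)) with hS_def
  have hS0 : 0 ≤ S := Real.sqrt_nonneg _
  have hS2 : S ^ 2 = 1 - c ^ 2 * (1 + ta ^ 2 + tb ^ 2) :=
    Real.sq_sqrt (by linarith)
  have hsa : sa = ta * ca := by rw [hta_def, hsa_def, hca_def, Real.tan_mul_cos hca]
  have hsb : sb = tb * cb := by rw [htb_def, hsb_def, hcb_def, Real.tan_mul_cos hcb]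
  have hr1 : ta ^ 2 * ca ^ 2 = 1 - ca ^ 2 := by
    have := Real.sin_sq_add_cos_sq (α / 2)
    rw [← hsa_def, ← hca_def] at this
    linear_combination this - (sa + ta * ca) * hsa
  have hr2 : tb ^ 2 * cb ^ 2 = 1 - cb ^ 2 := by
    have := Real.sin_sq_add_cos_sq (β / 2)
    rw [← hsb_def, ← hcb_def] at this
    linear_combination this - (sb + tb * cb) * hsb
  have hcosα : Real.cos α = 2 * ca ^ 2 - 1 := by
    have h := Real.cos_two_mul (α / 2)
    rw [show 2 * (α / 2) = α by ring, ← hca_def] at h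
    linarith
  have hcosβ : Real.cos β = 2 * cb ^ 2 - 1 := by
    have h := Real.cos_two_mul (β / 2)
    rw [show 2 * (β / 2) = β by ring, ← hcb_def] at h
    linarith
  have hsinα : Real.sin α = 2 * sa * ca := by
    have h := Real.sin_two_mul (α / 2)
    rw [show 2 * (α / 2) = α by ring, ← hca_def, ← hsa_def] at h
    linarith
  have hsinβ : Real.sin β = 2 * sb * cb := by
    have h := Real.sin_two_mul (β / 2)
    rw [show 2 * (β / 2) = β by ring, ← hcb_def, ← hsb_def] at h
    linarith
  -- the amplitude
  have hsum : (∑ i, ∑ j, (starRingEnd ℂ) (Ψ i j) * (u i * v j)) =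
      ((S * ca * cb : ℝ) : ℂ) * Complex.exp (-Complex.I * δ)
      - ((c * sa * sb : ℝ) : ℂ) * Complex.exp (Complex.I * (φ + ξ)) := by
    have hta : ((ta : ℝ) : ℂ) * ((ca : ℝ) : ℂ) = ((sa : ℝ) : ℂ) := by
      rw [← Complex.ofReal_mul, hta_def, hca_def, Real.tan_mul_cos hca, ← hsa_def]
    have htb : ((tb : ℝ) : ℂ) * ((cb : ℝ) : ℂ) = ((sb : ℝ) : ℂ) := by
      rw [← Complex.ofReal_mul, htb_def, hcb_def, Real.tan_mul_cos hcb, ← hsb_def]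
    simp only [Ψ, u, v, Fin.sum_univ_two, Matrix.cons_val', Matrix.cons_val_zero,
      Matrix.cons_val_one, Matrix.head_cons, Matrix.head_fin_const, Matrix.empty_val',
      Matrix.cons_val_fin_one, Matrix.of_apply, _root_.map_mul, map_neg, Complex.conj_ofReal,
      ← Complex.exp_conj, Complex.conj_I, neg_mul, neg_neg, Complex.ofReal_mul]
    rw [show Complex.I * ((φ : ℂ) + (ξ : ℂ)) = Complex.I * φ + Complex.I * ξ by ring,
      Complex.exp_add]
    linear_combination (-(c : ℂ) * (Complex.exp (Complex.I * φ) * Complex.exp (Complex.I * ξ)) *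
        ((sb : ℝ) : ℂ)) * hta +
      (-(c : ℂ) * (Complex.exp (Complex.I * φ) * Complex.exp (Complex.I * ξ)) *
        ((sa : ℝ) : ℂ)) * htb
  have hp : p = (S * ca * cb) ^ 2 + (c * sa * sb) ^ 2
      - 2 * (S * ca * cb) * (c * sa * sb) * Real.cos (δ + ξ + φ) := by
    show ‖_‖ ^ 2 = _
    rw [hsum, Complex.sq_norm, Complex.normSq_sub]
    have e1 : Complex.normSq (((S * ca * cb : ℝ) : ℂ) * Complex.exp (-Complex.I * δ))
        = (S * ca * cb) ^ 2 := by
      rw [Complex.normSq_mul, Complex.normSq_ofReal, ← Complex.sq_norm, Complex.norm_exp]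
      simp [sq]
    have e2 : Complex.normSq (((c * sa * sb : ℝ) : ℂ) * Complex.exp (Complex.I * (φ + ξ)))
        = (c * sa * sb) ^ 2 := by
      rw [Complex.normSq_mul, Complex.normSq_ofReal, ← Complex.sq_norm, Complex.norm_exp]
      simp [sq]
    have e3 : ((((S * ca * cb : ℝ) : ℂ) * Complex.exp (-Complex.I * δ)) *
        (starRingEnd ℂ) (((c * sa * sb : ℝ) : ℂ) * Complex.exp (Complex.I * (φ + ξ)))).re
        = (S * ca * cb) * (c * sa * sb) * Real.cos (δ + ξ + φ) := by
      have hconj : (starRingEnd ℂ) (((c * sa * sb : ℝ) : ℂ) * Complex.exp (Complex.I * ((φ : ℂ) + (ξ : ℂ))))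
          = ((c * sa * sb : ℝ) : ℂ) * Complex.exp (-(Complex.I * ((φ : ℂ) + (ξ : ℂ)))) := by
        rw [_root_.map_mul, Complex.conj_ofReal, ← Complex.exp_conj]
        congr 1
        simp [map_add, Complex.conj_I, Complex.conj_ofReal]
      rw [hconj, mul_mul_mul_comm, ← Complex.exp_add, ← Complex.ofReal_mul]
      rw [show -Complex.I * (δ : ℂ) + -(Complex.I * ((φ : ℂ) + (ξ : ℂ)))
          = ((-(δ + ξ + φ) : ℝ) : ℂ) * Complex.I by push_cast; ring]
      rw [Complex.re_ofReal_mul, Complex.exp_ofReal_mul_I_re, Real.cos_neg]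
    rw [e1, e2, e3]
    ring
  have hq : q = S ^ 2 := by
    show ‖Ψ 0 0‖ ^ 2 = S ^ 2
    have : Ψ 0 0 = Complex.exp (Complex.I * δ) * ((S : ℝ) : ℂ) := by
      simp [Ψ, hS_def, hta_def, htb_def]
    rw [this, norm_mul, Complex.norm_exp, Complex.norm_real]
    simp [_root_.abs_of_nonneg hS0, sq]
  have hsqrt : Real.sqrt (c ^ 2 * (-ta ^ 2) - 2 * c ^ 2 / (Real.cos β + 1) + 1) = S := by
    rw [hS_def]
    congr 1
    have h1 : Real.cos β + 1 = 2 * cb ^ 2 := by rw [hcosβ]; ring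
    rw [h1]
    field_simp
    linear_combination (c ^ 2) * hr2
  rw [hp, hq, hsqrt, hcosα, hcosβ, hsinα, hsinβ, hsa, hsb]
  linear_combination (ca ^ 2 * cb ^ 2 - 1) * hS2 + c ^ 2 * (tb ^ 2 * cb ^ 2 - cb ^ 2) * hr1 +
    c ^ 2 * (1 - 2 * ca ^ 2) * hr2
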